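/- The d_•-global attractor exists if and only if ω_•(X) is a d_•-attracting set. -/

import Mathlib

open Set Filter Topology

/-- The topology induced by a metric structure `m` on `X`. -/
def mtop {X : Type*} (m : MetricSpace X) : TopologicalSpace X :=
  m.toPseudoMetricSpace.toUniformSpace.toTopologicalSpace

/-- An evolutionary system: for each `T : ℝ`, `E T` is the set of trajectories on `[T, ∞)`
(modeled as functions `ℝ → X`), with translation and restriction properties. -/
structure EvolSys (X : Type*) where
  E : ℝ → Set (ℝ → X)
  nonempty : (E 0).Nonempty
  translate : ∀ T s : ℝ, E (T + s) = {u | (fun t => u (t + s)) ∈ E T}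
  restrict : ∀ T T' : ℝ, T ≤ T' → E T ⊆ E T'

/-- Complete trajectories. -/
def EvolSys.Einf {X : Type*} (ES : EvolSys X) : Set (ℝ → X) := {u | ∀ T : ℝ, u ∈ ES.E T}

/-- `R t A = {u t : u 0 ∈ A, u ∈ E([0,∞))}`. -/
def EvolSys.R {X : Type*} (ES : EvolSys X) (t : ℝ) (A : Set X) : Set X :=
  {x | ∃ u ∈ ES.E 0, u 0 ∈ A ∧ u t = x}

/-- `R̃ t A = {u t : u 0 ∈ A, u ∈ E((-∞,∞))}`. -/
def EvolSys.Rt {X : Type*} (ES : EvolSys X) (t : ℝ) (A : Set X) : Set X :=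
  {x | ∃ u ∈ ES.Einf, u 0 ∈ A ∧ u t = x}

/-- The omega-limit of `A` with respect to the metric `m`. -/
def omegaLim {X : Type*} (m : MetricSpace X) (ES : EvolSys X) (A : Set X) : Set X :=
  ⋂ T ∈ Ici (0:ℝ), @closure X (mtop m) (⋃ t ∈ Ici T, ES.R t A)

/-- `P` uniformly attracts `A` in the metric `m`. -/
def attracts {X : Type*} (m : MetricSpace X) (ES : EvolSys X) (P A : Set X) : Prop :=
  ∀ ε > (0:ℝ), ∃ t₀ : ℝ, ∀ t ≥ t₀, ∀ x ∈ ES.R t A, ∃ p ∈ P, m.dist x p < ε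

/-- `P` is an attracting set in the metric `m`. -/
def isAttracting {X : Type*} (m : MetricSpace X) (ES : EvolSys X) (P : Set X) : Prop :=
  attracts m ES P univ

/-- A global attractor in metric `m`: a minimal closed attracting set. -/
def isGlobalAttractor {X : Type*} (m : MetricSpace X) (ES : EvolSys X) (A : Set X) : Prop :=
  @IsClosed X (mtop m) A ∧ isAttracting m ES A ∧
    ∀ B ⊆ A, @IsClosed X (mtop m) B → isAttracting m ES B → B = A

/-- Asymptotic compactness with respect to the strong metric `ms`. -/
def asympCompact {X : Type*} (ms : MetricSpace X) (ES : EvolSys X) : Prop :=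
  ∀ (t : ℕ → ℝ) (x : ℕ → X), Tendsto t atTop atTop →
    (∀ n, x n ∈ ES.R (t n) univ) →
    ∃ (φ : ℕ → ℕ) (y : X), StrictMono φ ∧
      Tendsto (fun n => ms.dist (x (φ n)) y) atTop (𝓝 0)

/-- Quasi-invariance of `A`: through every point of `A` passes a complete trajectory
lying in `A`. -/
def quasiInvariant {X : Type*} (ES : EvolSys X) (A : Set X) : Prop :=
  ∀ a ∈ A, ∃ u ∈ ES.Einf, u 0 = a ∧ ∀ t : ℝ, u t ∈ A

/-- Condition A1: `E([0,∞))` is (sequentially) compact in `C([0,∞); X_w)`, i.e. every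
sequence of trajectories has a subsequence converging, uniformly in `d_w` on every
compact subinterval of `[0,∞)`, to a trajectory. -/
def A1cond {X : Type*} (mw : MetricSpace X) (ES : EvolSys X) : Prop :=
  ∀ u : ℕ → ℝ → X, (∀ n, u n ∈ ES.E 0) →
    ∃ (φ : ℕ → ℕ) (v : ℝ → X), StrictMono φ ∧ v ∈ ES.E 0 ∧
      ∀ T > (0:ℝ), ∀ ε > (0:ℝ), ∃ N : ℕ, ∀ n ≥ N, ∀ s ∈ Icc (0:ℝ) T,
        mw.dist (u (φ n) s) (v s) < ε

/-- The metric of `C([a,∞); X_w)`. -/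
noncomputable def dC {X : Type*} (mw : MetricSpace X) (a : ℝ) (u v : ℝ → X) : ℝ :=
  ∑' T : ℕ, (1/2 : ℝ)^T *
    (sSup ((fun t => mw.dist (u t) (v t)) '' Icc a (a + T)) /
     (1 + sSup ((fun t => mw.dist (u t) (v t)) '' Icc a (a + T))))

/-- ω(X) is contained in every closed attracting set. -/
lemma omega_subset_closed_attracting {X : Type*} (m : MetricSpace X) (ES : EvolSys X)
    {B : Set X} (hBc : @IsClosed X (mtop m) B) (hBa : isAttracting m ES B) :
    omegaLim m ES Set.univ ⊆ B := by
  letI := m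
  intro x hx
  have hBc' : IsClosed B := hBc
  rw [← hBc'.closure_eq]
  rw [Metric.mem_closure_iff]
  intro ε hε
  obtain ⟨t₀, ht₀⟩ := hBa (ε / 2) (by linarith)
  have hT : max t₀ 0 ∈ Ici (0 : ℝ) := Set.mem_Ici.mpr (le_max_right _ _)
  have hx' : x ∈ @closure X (mtop m) (⋃ t ∈ Ici (max t₀ 0), ES.R t Set.univ) := by
    have := hx
    simp only [omegaLim, mem_iInter] at this
    exact this _ hT
  have hx'' : x ∈ closure (⋃ t ∈ Ici (max t₀ 0), ES.R t Set.univ) := hx'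
  rw [Metric.mem_closure_iff] at hx''
  obtain ⟨y, hy, hxy⟩ := hx'' (ε / 2) (by linarith)
  simp only [mem_iUnion] at hy
  obtain ⟨t, ht, hyt⟩ := hy
  obtain ⟨p, hp, hyp⟩ := ht₀ t (le_trans (le_max_left _ _) ht) y hyt
  exact ⟨p, hp, by
    calc dist x p ≤ dist x y + dist y p := dist_triangle _ _ _
      _ < ε / 2 + ε / 2 := by exact add_lt_add hxy hyp
      _ = ε := by ring⟩

theorem stmt6 {X : Type*} (m : MetricSpace X) (ES : EvolSys X) :
    (∃ A : Set X, isGlobalAttractor m ES A) ↔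
      isAttracting m ES (omegaLim m ES Set.univ) := by
  letI := m
  constructor
  · rintro ⟨A, hAc, hAa, hmin⟩
    -- A ⊆ ω(X)
    have hAω : A ⊆ omegaLim m ES Set.univ := by
      intro a ha
      by_contra haω
      simp only [omegaLim, mem_iInter] at haω
      push_neg at haω
      obtain ⟨T, hT, haT⟩ := haω
      set C : Set X := closure (⋃ t ∈ Ici T, ES.R t Set.univ) with hC
      have haC : a ∉ C := haT
      obtain ⟨δ, hδ, hball⟩ : ∃ δ > 0, Metric.ball a δ ⊆ Cᶜ := by
        have : IsOpen Cᶜ := isClosed_closure.isOpen_compl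
        exact Metric.isOpen_iff.mp this a haC
      set B : Set X := A \ Metric.ball a (δ / 2) with hB
      have hBc : IsClosed B := (hAc : IsClosed A).sdiff Metric.isOpen_ball
      have hBa : isAttracting m ES B := by
        intro ε hε
        set ε' := min ε (δ / 4) with hε'
        have hε'pos : 0 < ε' := lt_min hε (by linarith)
        obtain ⟨t₀, ht₀⟩ := hAa ε' hε'pos
        refine ⟨max t₀ T, fun t ht x hx => ?_⟩
        obtain ⟨p, hpA, hxp⟩ := ht₀ t (le_trans (le_max_left _ _) ht) x hx
        have hxC : x ∈ C := subset_closure (mem_iUnion₂.mpr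
          ⟨t, le_trans (le_max_right _ _) ht, hx⟩)
        have hxa : δ ≤ dist x a := by
          by_contra h
          push_neg at h
          exact hball (Metric.mem_ball.mpr h) hxC
        have hpB : p ∈ B := by
          refine ⟨hpA, fun hpb => ?_⟩
          have h1 : dist p a < δ / 2 := Metric.mem_ball.mp hpb
          have h2 : dist x p < δ / 4 := lt_of_lt_of_le hxp (min_le_right _ _)
          have := dist_triangle x p a
          linarith
        exact ⟨p, hpB, lt_of_lt_of_le hxp (min_le_left _ _)⟩
      have := hmin B diff_subset hBc hBa
      have haB : a ∈ B := this ▸ ha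
      exact haB.2 (Metric.mem_ball_self (by linarith))
    have hωA : omegaLim m ES Set.univ ⊆ A :=
      omega_subset_closed_attracting m ES hAc hAa
    have : omegaLim m ES Set.univ = A := le_antisymm hωA hAω
    rw [this]
    exact hAa
  · intro hω
    refine ⟨omegaLim m ES Set.univ, ?_, hω, ?_⟩
    · exact isClosed_biInter fun T _ => isClosed_closure
    · intro B hBsub hBc hBa
      exact le_antisymm hBsub (omega_subset_closed_attracting m ES hBc hBa)
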